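/- Let Γ be a group and γ ∈ Γ such that γ is not conjugate to γ⁻¹. Let S := {x ∈ Γ : x is conjugate to γ} ∪ {x ∈ Γ : x is conjugate to γ⁻¹}; S is invariant under conjugation by Γ and under inversion x ↦ x⁻¹. Let V be the ℂ-vector space of finitely supported functions S → ℂ, regarded as a representation of Γ via (g·f)(x) = f(g⁻¹xg), and define τ : V → V by (τf)(x) = f(x⁻¹). Then τ is a Γ-equivariant ℂ-linear involution, and each eigenspace {f ∈ V : τf = f} and {f ∈ V : τf = −f} is, as a representation of Γ, isomorphic to the permutation representation of Γ on finitely supported functions ({x : x conjugate to γ} → ℂ): for either sign ε = ±1, the map sending a finitely supported function f on the conjugacy class of γ to the function on S equal to f on that class and equal to ε·f(x⁻¹) at points x of the conjugacy class of γ⁻¹ is a Γ-equivariant ℂ-linear isomorphism onto the ε-eigenspace of τ. -/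

import Mathlib

namespace Stmt7

variable {Γ : Type*} [Group Γ]

lemma isConj_inv' {Γ : Type*} [Group Γ] {a b : Γ} (h : IsConj a b) : IsConj a⁻¹ b⁻¹ := by
  obtain ⟨c, hc⟩ := isConj_iff.mp h
  refine isConj_iff.mpr ⟨c, ?_⟩
  rw [← hc]
  group

/-- The union `S` of the conjugacy classes of `γ` and of `γ⁻¹`. -/
def S (γ : Γ) : Set Γ := {x | IsConj γ x ∨ IsConj γ⁻¹ x}

/-- The conjugacy class `C` of `γ`. -/
def C (γ : Γ) : Set Γ := {x | IsConj γ x}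

lemma conj_mem_S (γ g : Γ) {x : Γ} (hx : x ∈ S γ) : g * x * g⁻¹ ∈ S γ := by
  have hx' : IsConj γ x ∨ IsConj γ⁻¹ x := hx
  have hc : IsConj x (g * x * g⁻¹) := isConj_iff.mpr ⟨g, rfl⟩
  exact hx'.imp (fun h => h.trans hc) (fun h => h.trans hc)

lemma inv_mem_S (γ : Γ) {x : Γ} (hx : x ∈ S γ) : x⁻¹ ∈ S γ := by
  have hx' : IsConj γ x ∨ IsConj γ⁻¹ x := hx
  rcases hx' with h | h
  · exact Or.inr (isConj_inv' h)
  · exact Or.inl (by simpa using isConj_inv' h)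

lemma conj_mem_C (γ g : Γ) {x : Γ} (hx : x ∈ C γ) : g * x * g⁻¹ ∈ C γ := by
  have hx' : IsConj γ x := hx
  exact hx'.trans (isConj_iff.mpr ⟨g, rfl⟩)

lemma inv_mem_C (γ : Γ) {x : Γ} (hx : IsConj γ⁻¹ x) : x⁻¹ ∈ C γ := by
  have h := isConj_inv' hx
  show IsConj γ x⁻¹
  simpa using h

/-- Conjugation by `g` as a bijection of `S γ`. -/
def conjS (γ g : Γ) : ↥(S γ) ≃ ↥(S γ) where
  toFun x := ⟨g * (x : Γ) * g⁻¹, conj_mem_S γ g x.2⟩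
  invFun x := ⟨g⁻¹ * (x : Γ) * g, by
    have h := conj_mem_S γ g⁻¹ x.2
    simpa using h⟩
  left_inv x := by
    apply Subtype.ext
    show g⁻¹ * (g * (x : Γ) * g⁻¹) * g = (x : Γ)
    group
  right_inv x := by
    apply Subtype.ext
    show g * (g⁻¹ * (x : Γ) * g) * g⁻¹ = (x : Γ)
    group

/-- Inversion as a bijection of `S γ`. -/
def invS (γ : Γ) : ↥(S γ) ≃ ↥(S γ) where
  toFun x := ⟨(x : Γ)⁻¹, inv_mem_S γ x.2⟩
  invFun x := ⟨(x : Γ)⁻¹, inv_mem_S γ x.2⟩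
  left_inv x := by
    apply Subtype.ext
    show ((x : Γ)⁻¹)⁻¹ = (x : Γ)
    exact inv_inv _
  right_inv x := by
    apply Subtype.ext
    show ((x : Γ)⁻¹)⁻¹ = (x : Γ)
    exact inv_inv _

/-- Conjugation by `g` as a bijection of `C γ`. -/
def conjC (γ g : Γ) : ↥(C γ) ≃ ↥(C γ) where
  toFun x := ⟨g * (x : Γ) * g⁻¹, conj_mem_C γ g x.2⟩
  invFun x := ⟨g⁻¹ * (x : Γ) * g, by
    have h := conj_mem_C γ g⁻¹ x.2
    simpa using h⟩
  left_inv x := by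
    apply Subtype.ext
    show g⁻¹ * (g * (x : Γ) * g⁻¹) * g = (x : Γ)
    group
  right_inv x := by
    apply Subtype.ext
    show g * (g⁻¹ * (x : Γ) * g) * g⁻¹ = (x : Γ)
    group

/-- The action `(g·f)(x) = f(g⁻¹xg)` of `Γ` on finitely supported functions on `S γ`. -/
noncomputable def actS (γ g : Γ) (f : ↥(S γ) →₀ ℂ) : ↥(S γ) →₀ ℂ :=
  Finsupp.equivMapDomain (conjS γ g) f

/-- The action `(g·f)(x) = f(g⁻¹xg)` of `Γ` on finitely supported functions on `C γ`. -/
noncomputable def actC (γ g : Γ) (f : ↥(C γ) →₀ ℂ) : ↥(C γ) →₀ ℂ :=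
  Finsupp.equivMapDomain (conjC γ g) f

/-- The involution `(τf)(x) = f(x⁻¹)`. -/
noncomputable def tauInv (γ : Γ) (f : ↥(S γ) →₀ ℂ) : ↥(S γ) →₀ ℂ :=
  Finsupp.equivMapDomain (invS γ) f

/-- The inclusion of the conjugacy class of `γ` into `S γ`. -/
def j₁ (γ : Γ) : ↥(C γ) ↪ ↥(S γ) where
  toFun y := ⟨(y : Γ), Or.inl y.2⟩
  inj' := by
    intro a b h
    have h' : (a : Γ) = (b : Γ) := congrArg (Subtype.val : ↥(S γ) → Γ) h
    exact Subtype.ext h'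

/-- The inversion embedding of the conjugacy class of `γ` into `S γ`. -/
def j₂ (γ : Γ) : ↥(C γ) ↪ ↥(S γ) where
  toFun y := ⟨(y : Γ)⁻¹, Or.inr (isConj_inv' y.2)⟩
  inj' := by
    intro a b h
    have h' : ((a : Γ)⁻¹ : Γ) = ((b : Γ)⁻¹ : Γ) := congrArg (Subtype.val : ↥(S γ) → Γ) h
    exact Subtype.ext (inv_injective h')

/-- The map sending a finitely supported function `f` on the conjugacy class of `γ` to the
function on `S γ` equal to `f` on that class and to `ε·f(x⁻¹)` at points `x` of the
conjugacy class of `γ⁻¹`. -/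
noncomputable def Φ (γ : Γ) (ε : ℂ) (f : ↥(C γ) →₀ ℂ) : ↥(S γ) →₀ ℂ :=
  Finsupp.embDomain (j₁ γ) f + ε • Finsupp.embDomain (j₂ γ) f

lemma actS_apply (γ g : Γ) (f : ↥(S γ) →₀ ℂ) (x : ↥(S γ)) :
    actS γ g f x = f ⟨g⁻¹ * (x : Γ) * g, by simpa using conj_mem_S γ g⁻¹ x.2⟩ := by
  have : actS γ g f x = f ((conjS γ g).symm x) := rfl
  rw [this]; congr 1

lemma actC_apply (γ g : Γ) (f : ↥(C γ) →₀ ℂ) (x : ↥(C γ)) :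
    actC γ g f x = f ⟨g⁻¹ * (x : Γ) * g, by simpa using conj_mem_C γ g⁻¹ x.2⟩ := by
  have : actC γ g f x = f ((conjC γ g).symm x) := rfl
  rw [this]; congr 1

lemma tauInv_apply (γ : Γ) (f : ↥(S γ) →₀ ℂ) (x : ↥(S γ)) :
    tauInv γ f x = f ⟨(x : Γ)⁻¹, inv_mem_S γ x.2⟩ := rfl

lemma not_mem_range_j₂ {γ : Γ} (hnc : ¬ IsConj γ γ⁻¹) {x : Γ} (hx : IsConj γ x)
    (hS : x ∈ S γ) : (⟨x, hS⟩ : ↥(S γ)) ∉ Set.range (j₂ γ) := by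
  rintro ⟨y, hy⟩
  have hval : ((y : Γ)⁻¹ : Γ) = x := congrArg Subtype.val hy
  have h1 : IsConj γ⁻¹ x := hval ▸ isConj_inv' y.2
  exact hnc (hx.trans h1.symm)

lemma not_mem_range_j₁ {γ : Γ} (hnc : ¬ IsConj γ γ⁻¹) {x : Γ} (hx : IsConj γ⁻¹ x)
    (hS : x ∈ S γ) : (⟨x, hS⟩ : ↥(S γ)) ∉ Set.range (j₁ γ) := by
  rintro ⟨y, hy⟩
  have hval : ((y : Γ) : Γ) = x := congrArg Subtype.val hy
  have h1 : IsConj γ x := hval ▸ y.2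
  exact hnc (h1.trans hx.symm)

lemma Phi_apply_inl {γ : Γ} (hnc : ¬ IsConj γ γ⁻¹) (ε : ℂ) (f : ↥(C γ) →₀ ℂ)
    {x : Γ} (hx : IsConj γ x) (hS : x ∈ S γ) :
    Φ γ ε f ⟨x, hS⟩ = f ⟨x, hx⟩ := by
  have h1 : Finsupp.embDomain (j₁ γ) f ⟨x, hS⟩ = f ⟨x, hx⟩ := by
    have : (⟨x, hS⟩ : ↥(S γ)) = j₁ γ ⟨x, hx⟩ := rfl
    rw [this, Finsupp.embDomain_apply_self]
  have h2 : Finsupp.embDomain (j₂ γ) f ⟨x, hS⟩ = 0 :=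
    Finsupp.embDomain_notin_range _ _ _ (not_mem_range_j₂ hnc hx hS)
  simp [Φ, Finsupp.add_apply, Finsupp.smul_apply, h1, h2]

lemma Phi_apply_inr {γ : Γ} (hnc : ¬ IsConj γ γ⁻¹) (ε : ℂ) (f : ↥(C γ) →₀ ℂ)
    {x : Γ} (hx : IsConj γ⁻¹ x) (hS : x ∈ S γ) :
    Φ γ ε f ⟨x, hS⟩ = ε * f ⟨x⁻¹, inv_mem_C γ hx⟩ := by
  have h1 : Finsupp.embDomain (j₁ γ) f ⟨x, hS⟩ = 0 :=
    Finsupp.embDomain_notin_range _ _ _ (not_mem_range_j₁ hnc hx hS)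
  have h2 : Finsupp.embDomain (j₂ γ) f ⟨x, hS⟩ = f ⟨x⁻¹, inv_mem_C γ hx⟩ := by
    have : (⟨x, hS⟩ : ↥(S γ)) = j₂ γ ⟨x⁻¹, inv_mem_C γ hx⟩ := by
      apply Subtype.ext; show x = (x⁻¹)⁻¹; rw [inv_inv]
    rw [this, Finsupp.embDomain_apply_self]
  simp [Φ, Finsupp.add_apply, Finsupp.smul_apply, h1, h2]

lemma mem_S_cases {γ : Γ} (x : ↥(S γ)) : IsConj γ (x : Γ) ∨ IsConj γ⁻¹ (x : Γ) := x.2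

/-- Let `γ ∈ Γ` with `γ` not conjugate to `γ⁻¹`, and let
`S = class(γ) ∪ class(γ⁻¹)`.  Then `S` is invariant under conjugation and under inversion;
the inversion operator `τ` on `V = (S →₀ ℂ)` is a `Γ`-equivariant `ℂ`-linear involution for
the representation `(g·f)(x) = f(g⁻¹xg)`; and for either sign `ε = ±1` the explicit map `Φ`
is a `Γ`-equivariant `ℂ`-linear isomorphism from the permutation representation on the
conjugacy class of `γ` onto the `ε`-eigenspace of `τ`. -/
theorem eigenspace_decomposition (γ : Γ) (hnc : ¬ IsConj γ γ⁻¹) :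
    -- `S` is invariant under conjugation and under inversion
    ((∀ g x : Γ, x ∈ S γ → g * x * g⁻¹ ∈ S γ) ∧ (∀ x ∈ S γ, x⁻¹ ∈ S γ)) ∧
    -- `actS` is a `ℂ`-linear action of `Γ`
    ((∀ f : ↥(S γ) →₀ ℂ, actS γ 1 f = f) ∧
     (∀ (g h : Γ) (f : ↥(S γ) →₀ ℂ), actS γ (g * h) f = actS γ g (actS γ h f)) ∧
     (∀ (g : Γ) (f f' : ↥(S γ) →₀ ℂ), actS γ g (f + f') = actS γ g f + actS γ g f') ∧
     (∀ (g : Γ) (c : ℂ) (f : ↥(S γ) →₀ ℂ), actS γ g (c • f) = c • actS γ g f)) ∧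
    -- `τ` is a `Γ`-equivariant `ℂ`-linear involution
    ((∀ f f' : ↥(S γ) →₀ ℂ, tauInv γ (f + f') = tauInv γ f + tauInv γ f') ∧
     (∀ (c : ℂ) (f : ↥(S γ) →₀ ℂ), tauInv γ (c • f) = c • tauInv γ f) ∧
     (∀ f : ↥(S γ) →₀ ℂ, tauInv γ (tauInv γ f) = f) ∧
     (∀ (g : Γ) (f : ↥(S γ) →₀ ℂ), tauInv γ (actS γ g f) = actS γ g (tauInv γ f))) ∧
    -- for `ε = ±1`, `Φ γ ε` is a `Γ`-equivariant `ℂ`-linear isomorphism onto the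
    -- `ε`-eigenspace of `τ`
    (∀ ε : ℂ, ε = 1 ∨ ε = -1 →
      (∀ f f' : ↥(C γ) →₀ ℂ, Φ γ ε (f + f') = Φ γ ε f + Φ γ ε f') ∧
      (∀ (c : ℂ) (f : ↥(C γ) →₀ ℂ), Φ γ ε (c • f) = c • Φ γ ε f) ∧
      (∀ (g : Γ) (f : ↥(C γ) →₀ ℂ), Φ γ ε (actC γ g f) = actS γ g (Φ γ ε f)) ∧
      Function.Injective (Φ γ ε) ∧
      Set.range (Φ γ ε) = {f : ↥(S γ) →₀ ℂ | tauInv γ f = ε • f} ∧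
      -- pointwise description of `Φ`
      (∀ (f : ↥(C γ) →₀ ℂ) (x : Γ) (hx : x ∈ C γ),
          Φ γ ε f ⟨x, Or.inl hx⟩ = f ⟨x, hx⟩) ∧
      (∀ (f : ↥(C γ) →₀ ℂ) (x : Γ) (hx : IsConj γ⁻¹ x),
          Φ γ ε f ⟨x, Or.inr hx⟩ = ε * f ⟨x⁻¹, inv_mem_C γ hx⟩)) := by
  refine ⟨⟨fun g x hx => conj_mem_S γ g hx, fun x hx => inv_mem_S γ hx⟩,
    ⟨?_, ?_, ?_, ?_⟩, ⟨?_, ?_, ?_, ?_⟩, ?_⟩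
  · -- actS 1 = id
    intro f; ext x; rw [actS_apply]
    exact congrArg f (Subtype.ext (by group))
  · -- actS (g*h) = actS g ∘ actS h
    intro g h f; ext x; rw [actS_apply, actS_apply, actS_apply]
    exact congrArg f (Subtype.ext (by group))
  · -- additivity of actS
    intro g f f'; ext x
    simp [actS_apply, Finsupp.add_apply]
  · -- smul
    intro g c f; ext x
    simp [actS_apply, Finsupp.smul_apply]
  · -- tauInv additive
    intro f f'; ext x
    simp [tauInv_apply, Finsupp.add_apply]
  · -- tauInv smul
    intro c f; ext x
    simp [tauInv_apply, Finsupp.smul_apply]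
  · -- involution
    intro f; ext x; rw [tauInv_apply, tauInv_apply]
    exact congrArg f (Subtype.ext (by group))
  · -- tau equivariant
    intro g f; ext x
    rw [tauInv_apply, actS_apply, actS_apply, tauInv_apply]
    exact congrArg f (Subtype.ext (by group))
  · -- Φ part
    intro ε hε
    have hε2 : ε * ε = 1 := by rcases hε with rfl | rfl <;> norm_num
    refine ⟨?_, ?_, ?_, ?_, ?_, ?_, ?_⟩
    · -- additive
      intro f f'; ext x; obtain ⟨x, hS⟩ := x
      rcases mem_S_cases ⟨x, hS⟩ with h | h
      · simp [Phi_apply_inl hnc ε _ h, Finsupp.add_apply]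
      · simp only [Phi_apply_inr hnc ε _ h, Finsupp.add_apply,
          Phi_apply_inr hnc ε f h, Phi_apply_inr hnc ε f' h]
        ring
    · -- smul
      intro c f; ext x; obtain ⟨x, hS⟩ := x
      rcases mem_S_cases ⟨x, hS⟩ with h | h
      · simp [Phi_apply_inl hnc ε _ h, Finsupp.smul_apply]
      · simp only [Phi_apply_inr hnc ε _ h, Finsupp.smul_apply,
          Phi_apply_inr hnc ε f h, smul_eq_mul]
        ring
    · -- equivariance
      intro g f; ext x; obtain ⟨x, hS⟩ := x
      rw [actS_apply]
      rcases mem_S_cases ⟨x, hS⟩ with h | h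
      · have h' : IsConj γ (g⁻¹ * x * g) := h.trans (isConj_iff.mpr ⟨g⁻¹, by group⟩)
        rw [Phi_apply_inl hnc ε _ h, Phi_apply_inl hnc ε f h', actC_apply]
      · have h' : IsConj γ⁻¹ (g⁻¹ * x * g) := h.trans (isConj_iff.mpr ⟨g⁻¹, by group⟩)
        rw [Phi_apply_inr hnc ε _ h, Phi_apply_inr hnc ε f h', actC_apply]
        exact congrArg (ε * f ·) (Subtype.ext (by group))
    · -- injective
      intro f f' hff
      ext y; obtain ⟨y, hy⟩ := y
      have := DFunLike.congr_fun hff ⟨y, Or.inl hy⟩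
      exact (Phi_apply_inl hnc ε f hy _).symm.trans (this.trans (Phi_apply_inl hnc ε f' hy _))
    · -- range
      ext F; constructor
      · rintro ⟨f, rfl⟩
        show tauInv γ (Φ γ ε f) = ε • Φ γ ε f
        ext x; obtain ⟨x, hS⟩ := x
        rw [tauInv_apply, Finsupp.smul_apply, smul_eq_mul]
        rcases mem_S_cases ⟨x, hS⟩ with h | h
        · rw [Phi_apply_inr hnc ε f (isConj_inv' h), Phi_apply_inl hnc ε f h]
          exact congrArg (ε * f ·) (Subtype.ext (inv_inv x))
        · rw [Phi_apply_inl hnc ε f (inv_mem_C γ h), Phi_apply_inr hnc ε f h]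
          rw [← mul_assoc, hε2, one_mul]
      · intro hF
        have hF' : tauInv γ F = ε • F := hF
        refine ⟨Finsupp.comapDomain (j₁ γ) F ((j₁ γ).injective.injOn), ?_⟩
        ext x; obtain ⟨x, hS⟩ := x
        rcases mem_S_cases ⟨x, hS⟩ with h | h
        · rw [Phi_apply_inl hnc ε _ h, Finsupp.comapDomain_apply]
          exact congrArg F (Subtype.ext rfl)
        · rw [Phi_apply_inr hnc ε _ h, Finsupp.comapDomain_apply]
          have h1 := DFunLike.congr_fun hF' ⟨x, hS⟩
          rw [tauInv_apply, Finsupp.smul_apply, smul_eq_mul] at h1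
          have h2 : F (j₁ γ ⟨x⁻¹, inv_mem_C γ h⟩) = ε * F ⟨x, hS⟩ := by
            rw [show F (j₁ γ ⟨x⁻¹, inv_mem_C γ h⟩) = F ⟨x⁻¹, inv_mem_S γ hS⟩ from
              congrArg F (Subtype.ext rfl), h1]
          rw [h2, ← mul_assoc, hε2, one_mul]
    · intro f x hx; exact Phi_apply_inl hnc ε f hx (Or.inl hx)
    · intro f x hx; exact Phi_apply_inr hnc ε f hx (Or.inr hx)

end Stmt7
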